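/- Under the MoSoPI scheme with initialization T_{π_0} v_0 ≥ v_0, the value sequence is monotone: v_{k+1} ≥ v_k componentwise for all k ≥ 0. -/

import Mathlib

open Finset Filter

variable {S A : Type*} [Fintype S] [Fintype A]

/-- Bellman evaluation operator for policy `π`. -/
noncomputable def Tpi (P : S → A → S → ℝ) (r : S → A → ℝ) (γ : ℝ)
    (π : S → A → ℝ) (v : S → ℝ) : S → ℝ :=
  fun s => ∑ a, π s a * (r s a + γ * ∑ s', P s a s' * v s')

/-- Bellman optimality operator. -/
noncomputable def Topt [Nonempty A] (P : S → A → S → ℝ) (r : S → A → ℝ) (γ : ℝ)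
    (v : S → ℝ) : S → ℝ :=
  fun s => Finset.univ.sup' Finset.univ_nonempty
    (fun a => r s a + γ * ∑ s', P s a s' * v s')


lemma Tpi_mono_aux (P : S → A → S → ℝ) (r : S → A → ℝ) {γ : ℝ} (hγ : 0 ≤ γ)
    (p : S → A → ℝ) (hp : ∀ s a, 0 ≤ p s a) (hP0 : ∀ s a s', 0 ≤ P s a s')
    {u w : S → ℝ} (huw : u ≤ w) : Tpi P r γ p u ≤ Tpi P r γ p w := by
  intro s
  unfold Tpi
  refine Finset.sum_le_sum fun a _ => mul_le_mul_of_nonneg_left ?_ (hp s a)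
  refine add_le_add_right (mul_le_mul_of_nonneg_left ?_ hγ) _
  exact Finset.sum_le_sum fun s' _ => mul_le_mul_of_nonneg_left (huw s') (hP0 s a s')

lemma Tpi_iter_mono_aux (P : S → A → S → ℝ) (r : S → A → ℝ) {γ : ℝ} (hγ : 0 ≤ γ)
    (p : S → A → ℝ) (hp : ∀ s a, 0 ≤ p s a) (hP0 : ∀ s a s', 0 ≤ P s a s')
    {u w : S → ℝ} (huw : u ≤ w) (n : ℕ) :
    (Tpi P r γ p)^[n] u ≤ (Tpi P r γ p)^[n] w := by
  induction n with
  | zero => exact huw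
  | succ n ih =>
    rw [Function.iterate_succ_apply', Function.iterate_succ_apply']
    exact Tpi_mono_aux P r hγ p hp hP0 ih

lemma Tpi_le_iter_aux (P : S → A → S → ℝ) (r : S → A → ℝ) {γ : ℝ} (hγ : 0 ≤ γ)
    (p : S → A → ℝ) (hp : ∀ s a, 0 ≤ p s a) (hP0 : ∀ s a s', 0 ≤ P s a s')
    {u : S → ℝ} (hu : u ≤ Tpi P r γ p u) (n : ℕ) : u ≤ (Tpi P r γ p)^[n] u := by
  induction n with
  | zero => exact le_rfl
  | succ n ih =>
    calc u ≤ (Tpi P r γ p)^[n] u := ih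
      _ ≤ (Tpi P r γ p)^[n] (Tpi P r γ p u) := Tpi_iter_mono_aux P r hγ p hp hP0 hu n
      _ = (Tpi P r γ p)^[n+1] u := (Function.iterate_succ_apply _ _ _).symm

theorem stmt_9 (P : S → A → S → ℝ) (r : S → A → ℝ) (γ : ℝ) (m : ℕ)
    (π : ℕ → S → A → ℝ) (v : ℕ → S → ℝ)
    (hγ0 : 0 < γ) (hγ1 : γ < 1)
    (hπ0 : ∀ k s a, 0 ≤ π k s a) (hπ1 : ∀ k s, ∑ a, π k s a = 1)
    (hP0 : ∀ s a s', 0 ≤ P s a s') (hP1 : ∀ s a, ∑ s', P s a s' = 1)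
    (hm : 1 ≤ m)
    (hgreedy : ∀ k, Tpi P r γ (π k) (v k) ≤ Tpi P r γ (π (k + 1)) (v k))
    (heval : ∀ k, v (k + 1) = (Tpi P r γ (π (k + 1)))^[m] (v k))
    (hinit : v 0 ≤ Tpi P r γ (π 0) (v 0)) :
    ∀ k, v k ≤ v (k + 1) := by
  have key : ∀ k, v k ≤ Tpi P r γ (π (k + 1)) (v k) := by
    intro k
    induction k with
    | zero => exact le_trans hinit (hgreedy 0)
    | succ k ih =>
      refine le_trans ?_ (hgreedy (k + 1))
      rw [heval k]
      calc (Tpi P r γ (π (k+1)))^[m] (v k)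
          ≤ (Tpi P r γ (π (k+1)))^[m] (Tpi P r γ (π (k+1)) (v k)) :=
            Tpi_iter_mono_aux P r hγ0.le _ (hπ0 (k+1)) hP0 ih m
        _ = Tpi P r γ (π (k+1)) ((Tpi P r γ (π (k+1)))^[m] (v k)) :=
            (Function.iterate_succ_apply _ _ _).symm.trans
              (Function.iterate_succ_apply' _ _ _)
  intro k
  rw [heval k]
  exact Tpi_le_iter_aux P r hγ0.le _ (hπ0 (k+1)) hP0 (key k) m
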